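/- Let α > 1, u ≥ 0, and i ≥ 1 an integer. Then ∫_0^∞ (z+u+1)^{-(α+2)} (1 − (z+u+1)^{-α})^{i−1} dz ≤ e / ((α+1)(1+u)·i). -/

import Mathlib

open MeasureTheory Set Filter Topology

/-- second bound on the stability integral `I_{i,α+2}`:
`∫_0^∞ (z+u+1)^{-(α+2)} (1−(z+u+1)^{-α})^{i−1} dz ≤ e/((α+1)(1+u)i)`. -/
theorem ftpl_pareto_stability_integral_second_bound
    (α : ℝ) (hα : 1 < α) (u : ℝ) (hu : 0 ≤ u) (i : ℕ) (hi : 1 ≤ i) :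
    (∫ z in Set.Ioi (0 : ℝ),
        (z + u + 1) ^ (-(α + 2)) * (1 - (z + u + 1) ^ (-α)) ^ (i - 1))
      ≤ Real.exp 1 / ((α + 1) * (1 + u) * i) := by
  have hc1 : (1 : ℝ) ≤ u + 1 := by linarith
  have hi0 : (0 : ℝ) < i := by exact_mod_cast hi
  have hα0 : (0 : ℝ) < α := by linarith
  -- the antiderivative
  set F : ℝ → ℝ := fun z => (1 - (z + u + 1) ^ (-α)) ^ i with hF
  set f : ℝ → ℝ := fun z =>
    (i * α) * ((z + u + 1) ^ (-(α + 1)) * (1 - (z + u + 1) ^ (-α)) ^ (i - 1)) with hf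
  have hbase : ∀ z : ℝ, 0 ≤ z → (1 : ℝ) ≤ z + u + 1 := fun z hz => by linarith
  have hderiv : ∀ z ∈ Ici (0 : ℝ), HasDerivAt F (f z) z := by
    intro z hz
    have hz1 : (1 : ℝ) ≤ z + u + 1 := hbase z hz
    have hz0 : (0 : ℝ) < z + u + 1 := by linarith
    have h1 : HasDerivAt (fun z : ℝ => z + u + 1) 1 z := by
      simpa [add_assoc] using (hasDerivAt_id z).add_const (u + 1)
    have h2 : HasDerivAt (fun z : ℝ => (z + u + 1) ^ (-α))
        (1 * (-α) * (z + u + 1) ^ (-α - 1)) z :=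
      h1.rpow_const (Or.inl hz0.ne')
    have h3 : HasDerivAt (fun z : ℝ => 1 - (z + u + 1) ^ (-α))
        (-(1 * (-α) * (z + u + 1) ^ (-α - 1))) z := h2.const_sub 1
    have h4 := h3.pow i
    refine HasDerivAt.congr_deriv h4 ?_
    have e1 : -α - 1 = -(α + 1) := by ring
    simp only [hf, e1]
    ring
  have hnn : ∀ z : ℝ, 0 ≤ z → (z + u + 1) ^ (-α) ≤ 1 := fun z hz =>
    Real.rpow_le_one_of_one_le_of_nonpos (hbase z hz) (by linarith)
  have hfpos : ∀ z ∈ Ioi (0 : ℝ), 0 ≤ f z := by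
    intro z hz
    have hz' : (0:ℝ) ≤ z := le_of_lt hz
    have := hnn z hz'
    have h0 : (0:ℝ) < z + u + 1 := by linarith [hbase z hz']
    apply mul_nonneg (by positivity)
    exact mul_nonneg (Real.rpow_nonneg h0.le _) (pow_nonneg (by linarith) _)
  have htop : Tendsto F atTop (𝓝 1) := by
    have h0 : Tendsto (fun z : ℝ => (z + u + 1) ^ (-α)) atTop (𝓝 0) := by
      have h := (tendsto_rpow_neg_atTop hα0).comp
        (tendsto_atTop_add_const_right atTop (u + 1) (tendsto_id (α := ℝ)))
      simpa [Function.comp_def, add_assoc] using h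
    have : Tendsto F atTop (𝓝 ((1 - 0) ^ i)) :=
      (tendsto_const_nhds.sub h0).pow i
    simpa using this
  have hint : IntegrableOn f (Ioi (0:ℝ)) :=
    integrableOn_Ioi_deriv_of_nonneg' hderiv hfpos htop
  have hval : ∫ z in Ioi (0:ℝ), f z = 1 - F 0 :=
    integral_Ioi_of_hasDerivAt_of_nonneg' hderiv hfpos htop
  -- comparison function
  set C : ℝ := (i * α * (u + 1))⁻¹ with hC
  have hCpos : 0 < i * α * (u + 1) := by positivity
  have hmono : ∀ z ∈ Ioi (0:ℝ),
      (z + u + 1) ^ (-(α + 2)) * (1 - (z + u + 1) ^ (-α)) ^ (i - 1) ≤ C * f z := by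
    intro z hz
    have hz' : (0:ℝ) ≤ z := le_of_lt hz
    have hz1 : (1 : ℝ) ≤ z + u + 1 := hbase z hz'
    have hz0 : (0 : ℝ) < z + u + 1 := by linarith
    have hsplit : (z + u + 1) ^ (-(α + 2))
        = (z + u + 1) ^ (-(α + 1)) * (z + u + 1) ^ (-(1:ℝ)) := by
      rw [← Real.rpow_add hz0]; ring_nf
    have hle : (z + u + 1) ^ (-(1:ℝ)) ≤ (u + 1)⁻¹ := by
      rw [Real.rpow_neg_one]
      exact inv_anti₀ (by linarith) (by linarith)
    have hnn2 : (0:ℝ) ≤ (1 - (z + u + 1) ^ (-α)) ^ (i-1) :=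
      pow_nonneg (by linarith [hnn z hz']) _
    have hrp : (0:ℝ) ≤ (z + u + 1) ^ (-(α + 1)) := Real.rpow_nonneg hz0.le _
    calc (z + u + 1) ^ (-(α + 2)) * (1 - (z + u + 1) ^ (-α)) ^ (i - 1)
        = ((z + u + 1) ^ (-(1:ℝ))) * ((z + u + 1) ^ (-(α + 1)) * (1 - (z + u + 1) ^ (-α)) ^ (i - 1)) := by
          rw [hsplit]; ring
      _ ≤ (u + 1)⁻¹ * ((z + u + 1) ^ (-(α + 1)) * (1 - (z + u + 1) ^ (-α)) ^ (i - 1)) := by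
          apply mul_le_mul_of_nonneg_right hle (mul_nonneg hrp hnn2)
      _ = C * f z := by
          simp only [hf, hC]
          field_simp
  have hgint : Integrable (fun z => C * f z) (volume.restrict (Ioi (0:ℝ))) := hint.const_mul C
  have hstep : (∫ z in Set.Ioi (0 : ℝ),
        (z + u + 1) ^ (-(α + 2)) * (1 - (z + u + 1) ^ (-α)) ^ (i - 1))
      ≤ ∫ z in Ioi (0:ℝ), C * f z := by
    apply integral_mono_of_nonneg
    · filter_upwards [ae_restrict_mem measurableSet_Ioi] with z hz
      have hz' : (0:ℝ) ≤ z := le_of_lt hz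
      have hz0 : (0 : ℝ) < z + u + 1 := by linarith [hbase z hz']
      exact mul_nonneg (Real.rpow_nonneg hz0.le _)
        (pow_nonneg (by linarith [hnn z hz']) _)
    · exact hgint
    · filter_upwards [ae_restrict_mem measurableSet_Ioi] with z hz
      exact hmono z hz
  have hF0 : 0 ≤ F 0 := by
    simp only [hF]
    exact pow_nonneg (by linarith [hnn 0 le_rfl]) _
  have hend : ∫ z in Ioi (0:ℝ), C * f z ≤ C := by
    rw [integral_const_mul, hval]
    have : 1 - F 0 ≤ 1 := by linarith
    nlinarith [inv_nonneg.2 hCpos.le, hC]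
  have hfinal : C ≤ Real.exp 1 / ((α + 1) * (1 + u) * i) := by
    have he : (2:ℝ) ≤ Real.exp 1 := by
      have := Real.add_one_le_exp 1
      linarith
    rw [hC, inv_eq_one_div, div_le_div_iff₀ hCpos (by positivity)]
    nlinarith [mul_nonneg (mul_nonneg hi0.le (show (0:ℝ) ≤ 1 + u by linarith))
        (show (0:ℝ) ≤ α - 1 by linarith),
      mul_nonneg (sub_nonneg.2 he) hCpos.le]
  calc _ ≤ ∫ z in Ioi (0:ℝ), C * f z := hstep
    _ ≤ C := hend
    _ ≤ _ := hfinal
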